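/- Let D ≥ 1, let |ψ⟩ be a unit vector in ℂ^D and let ε ≥ 0. Let σ be any D×D density matrix (positive semidefinite complex matrix with trace 1) satisfying the fidelity condition ⟨ψ| σ |ψ⟩ ≥ 1 − ε. Then for every real μ ≥ −1 the matrix (1+μ)·|ψ⟩⟨ψ| + (1/2)·(√(μ² + 4ε(1+μ)) − μ)·I_D − σ is positive semidefinite; i.e. σ ⪯ (1+μ)|ψ⟩⟨ψ| + (1/2)(√(μ²+4ε(1+μ)) − μ)·I_D in the Loewner order. -/

import Mathlib

open Matrix ComplexOrder

section sqrtHelpers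
open scoped MatrixOrder

noncomputable def Matrix.PosSemidef.sqrt {n : Type*} [Fintype n] [DecidableEq n]
    {A : Matrix n n ℂ} (_hA : A.PosSemidef) : Matrix n n ℂ := CFC.sqrt A

lemma Matrix.PosSemidef.posSemidef_sqrt {n : Type*} [Fintype n] [DecidableEq n]
    {A : Matrix n n ℂ} (hA : A.PosSemidef) : hA.sqrt.PosSemidef :=
  (CFC.sqrt_nonneg A).posSemidef

lemma Matrix.PosSemidef.sqrt_mul_self {n : Type*} [Fintype n] [DecidableEq n]
    {A : Matrix n n ℂ} (hA : A.PosSemidef) : hA.sqrt * hA.sqrt = A :=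
  CFC.sqrt_mul_sqrt_self A hA.nonneg

end sqrtHelpers

lemma inner_piLp_equiv_symm' {D : ℕ} (u v : Fin D → ℂ) :
    inner ℂ ((WithLp.equiv 2 (Fin D → ℂ)).symm u) ((WithLp.equiv 2 (Fin D → ℂ)).symm v)
      = star u ⬝ᵥ v := by
  rw [dotProduct_comm]; rfl

lemma trace_psd_nonneg {n : Type*} [Fintype n] [DecidableEq n] {M : Matrix n n ℂ}
    (hM : M.PosSemidef) : 0 ≤ M.trace := by
  rw [Matrix.trace]
  apply Finset.sum_nonneg
  intro i _
  have := hM.dotProduct_mulVec_nonneg (Pi.single i 1)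
  simpa [dotProduct, Pi.single_apply, Matrix.diag] using this

lemma trace_mul_psd_nonneg {n : Type*} [Fintype n] [DecidableEq n] {A B : Matrix n n ℂ}
    (hA : A.PosSemidef) (hB : B.PosSemidef) : 0 ≤ (A * B).trace := by
  have h2 := hB.conjTranspose_mul_mul_same hA.sqrt
  rw [hA.posSemidef_sqrt.isHermitian.eq] at h2
  have h1 : (A * B).trace = (hA.sqrt * B * hA.sqrt).trace := by
    conv_lhs => rw [← hA.sqrt_mul_self]
    rw [Matrix.mul_assoc, Matrix.trace_mul_comm, Matrix.mul_assoc]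
  rw [h1]
  exact trace_psd_nonneg h2

lemma dot_cs {D : ℕ} (u v : Fin D → ℂ) :
    ‖star u ⬝ᵥ v‖ ^ 2 ≤ (star u ⬝ᵥ u).re * (star v ⬝ᵥ v).re := by
  set x : EuclideanSpace ℂ (Fin D) := (WithLp.equiv 2 (Fin D → ℂ)).symm u
  set y : EuclideanSpace ℂ (Fin D) := (WithLp.equiv 2 (Fin D → ℂ)).symm v
  have h := norm_inner_le_norm (𝕜 := ℂ) x y
  have hxy : (inner ℂ x y : ℂ) = star u ⬝ᵥ v := inner_piLp_equiv_symm' u v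
  have hx : ‖x‖ * ‖x‖ = (star u ⬝ᵥ u).re := by
    rw [← inner_self_eq_norm_mul_norm (𝕜 := ℂ), inner_piLp_equiv_symm', RCLike.re_to_complex]
  have hy : ‖y‖ * ‖y‖ = (star v ⬝ᵥ v).re := by
    rw [← inner_self_eq_norm_mul_norm (𝕜 := ℂ), inner_piLp_equiv_symm', RCLike.re_to_complex]
  rw [hxy] at h
  calc ‖star u ⬝ᵥ v‖ ^ 2 ≤ (‖x‖ * ‖y‖) ^ 2 := by
        apply pow_le_pow_left₀ (norm_nonneg _) h
      _ = (star u ⬝ᵥ u).re * (star v ⬝ᵥ v).re := by rw [← hx, ← hy]; ring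

lemma psd_dot_eq {D : ℕ} {σ : Matrix (Fin D) (Fin D) ℂ} (hσ : σ.PosSemidef) (u v : Fin D → ℂ) :
    star u ⬝ᵥ σ *ᵥ v = star (hσ.sqrt *ᵥ u) ⬝ᵥ (hσ.sqrt *ᵥ v) := by
  conv_rhs => rw [star_mulVec, ← dotProduct_mulVec, Matrix.mulVec_mulVec,
    hσ.posSemidef_sqrt.isHermitian.eq, hσ.sqrt_mul_self]

lemma psd_cs {D : ℕ} {σ : Matrix (Fin D) (Fin D) ℂ} (hσ : σ.PosSemidef) (u v : Fin D → ℂ) :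
    ‖star u ⬝ᵥ σ *ᵥ v‖ ^ 2 ≤ (star u ⬝ᵥ σ *ᵥ u).re * (star v ⬝ᵥ σ *ᵥ v).re := by
  rw [psd_dot_eq hσ u v, psd_dot_eq hσ u u, psd_dot_eq hσ v v]
  exact dot_cs _ _

lemma vecMulVec_mul_vecMulVec' {D : ℕ} (a b c d : Fin D → ℂ) :
    vecMulVec a b * vecMulVec c d = (b ⬝ᵥ c) • vecMulVec a d := by
  ext i j
  simp only [mul_apply, vecMulVec_apply, Matrix.smul_apply, smul_eq_mul, dotProduct,
    Finset.sum_mul]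
  exact Finset.sum_congr rfl fun k _ => by ring

lemma trace_mul_vecMulVec' {D : ℕ} (M : Matrix (Fin D) (Fin D) ℂ) (u : Fin D → ℂ) :
    (M * vecMulVec u (star u)).trace = star u ⬝ᵥ M *ᵥ u := by
  simp only [Matrix.trace, Matrix.diag, mul_apply, vecMulVec_apply, dotProduct, mulVec,
    Pi.star_apply]
  exact Finset.sum_congr rfl fun k _ => by
    rw [Finset.mul_sum]
    exact Finset.sum_congr rfl fun i _ => by ring

lemma dot_herm_swap' {D : ℕ} {M : Matrix (Fin D) (Fin D) ℂ} (hM : M.IsHermitian)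
    (u v : Fin D → ℂ) : star v ⬝ᵥ M *ᵥ u = star (star u ⬝ᵥ M *ᵥ v) := by
  rw [star_dotProduct]
  congr 1
  rw [star_mulVec, hM.eq, ← dotProduct_mulVec]

lemma psd_dot_self_real {D : ℕ} {M : Matrix (Fin D) (Fin D) ℂ} (hM : M.PosSemidef)
    (x : Fin D → ℂ) : star x ⬝ᵥ M *ᵥ x = ((star x ⬝ᵥ M *ᵥ x).re : ℂ) := by
  have h := hM.dotProduct_mulVec_nonneg x
  rw [Complex.nonneg_iff] at h
  exact Complex.ext (by simp) (by simp [← h.2])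

lemma proj_compl_psd {D : ℕ} {Q : Matrix (Fin D) (Fin D) ℂ} (hH : Qᴴ = Q) (hQ : Q * Q = Q) :
    (1 - Q).PosSemidef := by
  have h : (1 - Q)ᴴ * (1 - Q) = 1 - Q := by
    rw [conjTranspose_sub, conjTranspose_one, hH]
    simp only [sub_mul, mul_sub, one_mul, mul_one, hQ]
    abel
  rw [← h]
  exact posSemidef_conjTranspose_mul_self _

lemma trace_bound' {D : ℕ} {σ : Matrix (Fin D) (Fin D) ℂ} (hσ : σ.PosSemidef)
    (ψ y : Fin D → ℂ) (hψ : star ψ ⬝ᵥ ψ = 1) (ho : star ψ ⬝ᵥ y = 0) :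
    (star ψ ⬝ᵥ σ *ᵥ ψ).re * (star y ⬝ᵥ y).re + (star y ⬝ᵥ σ *ᵥ y).re
      ≤ σ.trace.re * (star y ⬝ᵥ y).re := by
  by_cases hy : y = 0
  · simp [hy]
  -- notation
  set Nc := star y ⬝ᵥ y with hNcdef
  have hNc0 : Nc ≠ 0 := fun h => hy (dotProduct_star_self_eq_zero.mp h)
  have hNcnn : 0 ≤ Nc := dotProduct_star_self_nonneg y
  set N := Nc.re with hNdef
  have hNcre : Nc = (N : ℂ) := Complex.ext (by simp [hNdef]) (by
    have := (Complex.nonneg_iff.mp hNcnn).2; simp [← this])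
  have hNne : N ≠ 0 := fun h0 => hNc0 (by rw [hNcre, h0]; simp)
  have hNpos : 0 < N := lt_of_le_of_ne (Complex.nonneg_iff.mp hNcnn).1 (Ne.symm hNne)
  have hoy : star y ⬝ᵥ ψ = 0 := by
    have := congrArg star ho
    rwa [star_dotProduct, star_star, star_zero] at this
  set Q : Matrix (Fin D) (Fin D) ℂ :=
    vecMulVec ψ (star ψ) + (Nc⁻¹) • vecMulVec y (star y) with hQdef
  have hQH : Qᴴ = Q := by
    have hv : ∀ u : Fin D → ℂ, (vecMulVec u (star u))ᴴ = vecMulVec u (star u) := by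
      intro u; ext i j; simp [conjTranspose_apply, vecMulVec_apply, mul_comm]
    rw [hQdef, conjTranspose_add, conjTranspose_smul, hv, hv]
    congr 1
    rw [hNcre, ← Complex.ofReal_inv]
    simp [Complex.star_def]
  have hQQ : Q * Q = Q := by
    rw [hQdef]
    simp only [add_mul, mul_add, Matrix.smul_mul, Matrix.mul_smul,
      vecMulVec_mul_vecMulVec', hψ, ho, hoy, one_smul, zero_smul, smul_zero, smul_smul,
      ← hNcdef]
    rw [inv_mul_cancel₀ hNc0]
    simp
  have hpsd1Q : (1 - Q).PosSemidef := proj_compl_psd hQH hQQ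
  have htr := trace_mul_psd_nonneg hσ hpsd1Q
  have hexp : (σ * (1 - Q)).trace
      = σ.trace - (star ψ ⬝ᵥ σ *ᵥ ψ) - Nc⁻¹ * (star y ⬝ᵥ σ *ᵥ y) := by
    rw [hQdef, mul_sub, mul_one, mul_add, trace_sub, trace_add, mul_smul_comm, trace_smul,
      trace_mul_vecMulVec', trace_mul_vecMulVec', smul_eq_mul]
    ring
  rw [hexp] at htr
  rw [psd_dot_self_real hσ ψ, psd_dot_self_real hσ y, hNcre] at htr
  have h2 := (Complex.nonneg_iff.mp htr).1
  set F := (star ψ ⬝ᵥ σ *ᵥ ψ).re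
  set S := (star y ⬝ᵥ σ *ᵥ y).re
  have hinv : ((N : ℂ)⁻¹ * (S : ℂ)).re = N⁻¹ * S := by
    rw [← Complex.ofReal_inv, ← Complex.ofReal_mul, Complex.ofReal_re]
  simp only [Complex.sub_re, Complex.ofReal_re, hinv] at h2
  -- h2 : 0 ≤ σ.trace.re - F - N⁻¹ * S
  have hS : 0 ≤ S := (Complex.nonneg_iff.mp (hσ.dotProduct_mulVec_nonneg y)).1
  rw [psd_dot_self_real hσ y] at *
  have : F + N⁻¹ * S ≤ σ.trace.re := by linarith
  have h3 : N⁻¹ * S * N = S := by field_simp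
  nlinarith [this, hNpos, mul_le_mul_of_nonneg_right this (le_of_lt hNpos)]

lemma F_le_trace' {D : ℕ} {σ : Matrix (Fin D) (Fin D) ℂ} (hσ : σ.PosSemidef)
    (ψ : Fin D → ℂ) (hψ : star ψ ⬝ᵥ ψ = 1) :
    (star ψ ⬝ᵥ σ *ᵥ ψ).re ≤ σ.trace.re := by
  have hQH : (vecMulVec ψ (star ψ))ᴴ = vecMulVec ψ (star ψ) := by
    ext i j; simp [conjTranspose_apply, vecMulVec_apply, mul_comm]
  have hQQ : vecMulVec ψ (star ψ) * vecMulVec ψ (star ψ) = vecMulVec ψ (star ψ) := by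
    rw [vecMulVec_mul_vecMulVec', hψ, one_smul]
  have htr := trace_mul_psd_nonneg hσ (proj_compl_psd hQH hQQ)
  have hexp : (σ * (1 - vecMulVec ψ (star ψ))).trace = σ.trace - (star ψ ⬝ᵥ σ *ᵥ ψ) := by
    rw [mul_sub, mul_one, trace_sub, trace_mul_vecMulVec']
  rw [hexp] at htr
  have := (Complex.nonneg_iff.mp htr).1
  simp only [Complex.sub_re] at this
  linarith

set_option maxHeartbeats 2000000 in
lemma key_real' (ε μ F A2 N S G r : ℝ) (hε : 0 ≤ ε) (hμ : -1 ≤ μ)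
    (hA2 : 0 ≤ A2) (hN : 0 ≤ N) (hS : 0 ≤ S) (hF0 : 0 ≤ F) (hF1 : F ≤ 1)
    (hFe : 1 - ε ≤ F) (htr : F * N + S ≤ N) (hG : G ^ 2 ≤ A2 * (F * S))
    (hr0 : 0 ≤ r) (hrsq : r ^ 2 = μ^2 + 4*ε*(1+μ)) :
    A2 * F + 2 * G + S
      ≤ (1 + μ) * A2 + ((1/2) * (r - μ)) * (A2 + N) := by
  obtain ⟨l, hldef⟩ : ∃ l, l = (1/2) * (r - μ) := ⟨_, rfl⟩
  rw [← hldef]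
  have hl : l * (l + μ) = ε * (1 + μ) := by
    rw [hldef]; linear_combination hrsq / 4
  obtain ⟨t, htdef⟩ : ∃ t, t = 1 - F := ⟨_, rfl⟩
  have ht0 : 0 ≤ t := by rw [htdef]; linarith
  have htε : t ≤ ε := by rw [htdef]; linarith
  have ht1 : t ≤ 1 := by rw [htdef]; linarith
  have hlμ : 0 ≤ l + μ := by
    have h1 : μ^2 ≤ r^2 := by nlinarith
    have h2 : -μ ≤ r := by nlinarith [hr0, h1]
    rw [hldef]; linarith
  have hlt : t ≤ l := by
    have h1 : (2*t + μ)^2 ≤ r^2 := by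
      rcases le_or_gt 0 (t + μ) with h | h
      · nlinarith [mul_le_mul htε (by linarith : t + μ ≤ 1 + μ) h hε]
      · nlinarith [mul_nonpos_of_nonneg_of_nonpos ht0 (le_of_lt h)]
    have h2 : 2*t + μ ≤ r := by nlinarith [hr0, h1]
    rw [hldef]; linarith
  obtain ⟨K, hKdef⟩ : ∃ K, K = μ + l + t := ⟨_, rfl⟩
  have hK0 : 0 ≤ K := by rw [hKdef]; linarith
  have hkey : (1 - t) * t ≤ K * (l - t) := by
    have he : K * (l - t) = ε * (1 + μ) - μ * t - t^2 := by
      rw [hKdef]; linear_combination hl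
    have h4 : t * (1 + μ) ≤ ε * (1 + μ) :=
      mul_le_mul_of_nonneg_right htε (by linarith)
    nlinarith [he, h4]
  have hSt : S ≤ t * N := by rw [htdef]; nlinarith
  have hgoal : (1 + μ) * A2 + l * (A2 + N) - (A2 * F + 2 * G + S)
      = K * A2 + l * N - 2 * G - S := by rw [hKdef, htdef]; ring
  have hmain : 0 ≤ K * A2 + l * N - 2 * G - S := by
    have hG2 : G ^ 2 ≤ A2 * ((1 - t) * S) := by
      rw [htdef]; ring_nf; ring_nf at hG; linarith
    rcases eq_or_lt_of_le hK0 with hK | hK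
    · have htz : t = 0 := by
        have := hlμ
        rw [hKdef] at hK
        linarith
      have hSz : S = 0 := le_antisymm (by rw [htz] at hSt; linarith) hS
      have hGz : G = 0 := by
        have h5 : G ^ 2 ≤ 0 := by rw [hSz] at hG2; linarith
        exact pow_eq_zero_iff two_ne_zero |>.mp (le_antisymm h5 (sq_nonneg G))
      rw [hGz, hSz]
      have hl0 : 0 ≤ l := by linarith
      nlinarith [mul_nonneg hK0 hA2, mul_nonneg hl0 hN]
    · rcases eq_or_lt_of_le hA2 with hA | hA
      · have hGz : G = 0 := by
          have h5 : G ^ 2 ≤ 0 := by rw [← hA] at hG2; simpa using hG2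
          exact pow_eq_zero_iff two_ne_zero |>.mp (le_antisymm h5 (sq_nonneg G))
        rw [hGz]
        nlinarith [mul_le_mul_of_nonneg_right hlt hN, mul_nonneg (le_of_lt hK) hA2]
      · have h1 : 0 ≤ A2 * ((1-t) * (t*N)) - G^2 := by
          nlinarith [mul_le_mul_of_nonneg_left hSt
            (mul_nonneg hA2 (by linarith : (0:ℝ) ≤ 1 - t))]
        have h2 : 0 ≤ K * A2 * (t*N - S) :=
          mul_nonneg (mul_nonneg hK0 hA2) (by linarith)
        have h3 : 0 ≤ A2 * N * (K*(l-t) - (1-t)*t) :=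
          mul_nonneg (mul_nonneg hA2 hN) (by linarith)
        have hpos : 0 < A2 * K := mul_pos hA hK
        nlinarith [sq_nonneg (K*A2 - G), h1, h2, h3, hpos]
  linarith [hgoal, hmain]

section helpers
variable {D : ℕ}

lemma vecMulVec_mulVec' (u v x : Fin D → ℂ) :
    vecMulVec u v *ᵥ x = (v ⬝ᵥ x) • u := by
  ext i
  simp only [mulVec, vecMulVec_apply, dotProduct, Pi.smul_apply, smul_eq_mul, Finset.sum_mul]
  exact Finset.sum_congr rfl fun j _ => by ring

lemma real_smul_matrix (c : ℝ) (A : Matrix (Fin D) (Fin D) ℂ) :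
    c • A = (c : ℂ) • A := by
  ext i j
  simp [Matrix.smul_apply, Complex.real_smul]

lemma dot_self_real' (y : Fin D → ℂ) :
    star y ⬝ᵥ y = (((star y ⬝ᵥ y).re : ℝ) : ℂ) := by
  have h := Complex.nonneg_iff.mp (dotProduct_star_self_nonneg y)
  exact Complex.ext (by simp) (by simp [← h.2])
end helpers


set_option maxHeartbeats 1000000 in
/-- Lemma 1: any state `σ` that is `ε`-close in fidelity to the unit vector `ψ`
satisfies `σ ⪯ (1+μ)|ψ⟩⟨ψ| + ½(√(μ²+4ε(1+μ)) − μ)·I` for every `μ ≥ −1`. -/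
theorem operator_bound_for_eps_close_states
    (D : ℕ) (hD : 1 ≤ D) (ψ : Fin D → ℂ) (hψ : star ψ ⬝ᵥ ψ = 1)
    (ε : ℝ) (hε : 0 ≤ ε)
    (σ : Matrix (Fin D) (Fin D) ℂ) (hσ : σ.PosSemidef) (hσtr : σ.trace = 1)
    (hfid : 1 - ε ≤ (star ψ ⬝ᵥ σ *ᵥ ψ).re)
    (μ : ℝ) (hμ : -1 ≤ μ) :
    ((1 + μ) • vecMulVec ψ (star ψ)
      + ((1 / 2) * (Real.sqrt (μ ^ 2 + 4 * ε * (1 + μ)) - μ)) • (1 : Matrix (Fin D) (Fin D) ℂ)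
      - σ).PosSemidef := by
  set lr : ℝ := (1 / 2) * (Real.sqrt (μ ^ 2 + 4 * ε * (1 + μ)) - μ) with hlrdef
  refine PosSemidef.of_dotProduct_mulVec_nonneg ?_ ?_
  · -- Hermitian
    show _ᴴ = _
    rw [conjTranspose_sub, conjTranspose_add, real_smul_matrix, real_smul_matrix,
      conjTranspose_smul, conjTranspose_smul, hσ.1.eq, conjTranspose_one]
    have hP : (vecMulVec ψ (star ψ))ᴴ = vecMulVec ψ (star ψ) := by
      ext i j; simp [conjTranspose_apply, vecMulVec_apply, mul_comm]
    rw [hP]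
    simp [Complex.star_def, Complex.conj_ofReal]
  · intro x
    -- decomposition
    set a : ℂ := star ψ ⬝ᵥ x with hadef
    set y : Fin D → ℂ := x - a • ψ with hydef
    have hx : x = a • ψ + y := by rw [hydef]; abel
    have ho : star ψ ⬝ᵥ y = 0 := by
      rw [hydef, dotProduct_sub, dotProduct_smul, hψ, smul_eq_mul, mul_one, ← hadef, sub_self]
    have hoy : star y ⬝ᵥ ψ = 0 := by
      have := congrArg star ho
      rwa [star_dotProduct, star_star, star_zero] at this
    have hax : star x ⬝ᵥ ψ = star a := by rw [star_dotProduct, ← hadef]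
    -- scalars
    set Fc : ℂ := star ψ ⬝ᵥ σ *ᵥ ψ with hFcdef
    set Sc : ℂ := star y ⬝ᵥ σ *ᵥ y with hScdef
    set Nc : ℂ := star y ⬝ᵥ y with hNcdef
    set g : ℂ := star ψ ⬝ᵥ σ *ᵥ y with hgdef
    have hgy : star y ⬝ᵥ σ *ᵥ ψ = star g := dot_herm_swap' hσ.1 ψ y
    -- expansion of the quadratic form
    have e1 : star x ⬝ᵥ (vecMulVec ψ (star ψ)) *ᵥ x = star a * a := by
      rw [vecMulVec_mulVec', dotProduct_smul, ← hadef, smul_eq_mul, hax]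
      ring
    have e2 : star x ⬝ᵥ x = star a * a + Nc := by
      conv_lhs => rw [hx]
      simp only [star_add, star_smul, add_dotProduct, dotProduct_add, smul_dotProduct,
        dotProduct_smul, smul_eq_mul, hψ, ho, hoy, ← hNcdef]
      ring
    have e3 : star x ⬝ᵥ σ *ᵥ x = star a * a * Fc + star a * g + a * star g + Sc := by
      conv_lhs => rw [hx]
      simp only [star_add, star_smul, mulVec_add, mulVec_smul, add_dotProduct, dotProduct_add,
        smul_dotProduct, dotProduct_smul, smul_eq_mul, ← hFcdef, ← hScdef, ← hgdef, hgy]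
      ring
    -- total
    have hz : star x ⬝ᵥ ((1 + μ) • vecMulVec ψ (star ψ)
        + lr • (1 : Matrix (Fin D) (Fin D) ℂ) - σ) *ᵥ x
        = ((1 + μ : ℝ) : ℂ) * (star a * a) + (lr : ℂ) * (star a * a + Nc)
          - (star a * a * Fc + star a * g + a * star g + Sc) := by
      rw [real_smul_matrix, real_smul_matrix, sub_mulVec, add_mulVec, smul_mulVec,
        smul_mulVec, one_mulVec, dotProduct_sub, dotProduct_add, dotProduct_smul,
        dotProduct_smul, e1, e2, e3, smul_eq_mul, smul_eq_mul]
    rw [hz]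
    -- realify
    set A2 : ℝ := Complex.normSq a with hA2def
    have haa : star a * a = (A2 : ℂ) := by
      rw [hA2def, Complex.star_def, Complex.normSq_eq_conj_mul_self]
    set F : ℝ := Fc.re with hFdef
    have hFc : Fc = (F : ℂ) := psd_dot_self_real hσ ψ
    set S : ℝ := Sc.re with hSdef
    have hSc : Sc = (S : ℂ) := psd_dot_self_real hσ y
    set N : ℝ := Nc.re with hNdef
    have hNc : Nc = (N : ℂ) := dot_self_real' y
    set G : ℝ := (star a * g).re with hGdef
    have hag : star a * g + a * star g = ((2 * G : ℝ) : ℂ) := by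
      have h1 : a * star g = star (star a * g) := by
        rw [StarMul.star_mul, star_star]; exact mul_comm _ _
      rw [h1, hGdef, Complex.star_def, Complex.add_conj]
    have hsum : ((1 + μ : ℝ) : ℂ) * (star a * a) + (lr : ℂ) * (star a * a + Nc)
          - (star a * a * Fc + star a * g + a * star g + Sc)
        = (((1 + μ) * A2 + lr * (A2 + N) - (A2 * F + 2 * G + S) : ℝ) : ℂ) := by
      have := hag
      rw [haa, hFc, hSc, hNc]
      rw [show (A2:ℂ) * (F:ℂ) + star a * g + a * star g + (S:ℂ)
          = (A2:ℂ) * (F:ℂ) + ((2 * G : ℝ) : ℂ) + (S:ℂ) by rw [← this]; ring]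
      push_cast
      ring
    rw [hsum, Complex.zero_le_real]
    -- now the real inequality
    have hA2 : 0 ≤ A2 := Complex.normSq_nonneg a
    have hN : 0 ≤ N := (Complex.nonneg_iff.mp (dotProduct_star_self_nonneg y)).1
    have hS : 0 ≤ S := (Complex.nonneg_iff.mp (hσ.dotProduct_mulVec_nonneg y)).1
    have hF0 : 0 ≤ F := (Complex.nonneg_iff.mp (hσ.dotProduct_mulVec_nonneg ψ)).1
    have htrre : σ.trace.re = 1 := by rw [hσtr]; simp
    have hF1 : F ≤ 1 := by have := F_le_trace' hσ ψ hψ; rw [htrre] at this; exact this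
    have htrb : F * N + S ≤ N := by
      have := trace_bound' hσ ψ y hψ ho
      rw [htrre] at this
      simpa using this
    have hGb : G ^ 2 ≤ A2 * (F * S) := by
      have h1 : G ^ 2 ≤ ‖star a * g‖ ^ 2 := by
        rw [hGdef]
        have := Complex.abs_re_le_norm (star a * g)
        nlinarith [abs_nonneg ((star a * g).re), neg_abs_le ((star a * g).re),
          le_abs_self ((star a * g).re)]
      have h3 : ‖star a * g‖ ^ 2 = A2 * ‖g‖ ^ 2 := by
        rw [norm_mul, norm_star, mul_pow, Complex.sq_norm, hA2def]
      have h4 : ‖g‖ ^ 2 ≤ F * S := by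
        have := psd_cs hσ ψ y
        rw [← hFcdef, ← hScdef, ← hgdef, ← hFdef, ← hSdef] at this
        exact this
      calc G ^ 2 ≤ A2 * ‖g‖ ^ 2 := by rw [← h3]; exact h1
        _ ≤ A2 * (F * S) := by nlinarith [hA2]
    have hargnn : 0 ≤ μ^2 + 4*ε*(1+μ) := by nlinarith
    have := key_real' ε μ F A2 N S G (Real.sqrt (μ ^ 2 + 4 * ε * (1 + μ))) hε hμ
      hA2 hN hS hF0 hF1 hfid htrb hGb (Real.sqrt_nonneg _) (Real.sq_sqrt hargnn)
    rw [hlrdef]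
    linarith [this]
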